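/- Let g(x) = Σ_{i=0}^{m} c_i x^i ∈ F[x] and 0 < δ < 1. Then for every integer r with q^r < δ and every index k ∈ {0,…,m} with |c_k| ≥ δ · max_{0 ≤ i ≤ m} |c_i|, one has sup_{x ∈ B(0,q^r)} |g(x)| ≥ |c_k| q^{rk} / k^k (with the convention 0^0 = 1), where B(0,q^r) denotes the ball of radius q^r about 0 in F. -/

import Mathlib

/-!
Common setup for Khintchine–Groshev type theorems over the function field
`F = 𝔽_q((X⁻¹))`, following Das–Ganguly,
"Inhomogeneous Khintchine-Groshev type theorems on manifolds over function fields".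
-/

open Filter MeasureTheory
open scoped Topology ENNReal Classical

noncomputable section

namespace KGFF

variable (Fq : Type) [Field Fq] [Fintype Fq]

/-- The local field `F = 𝔽_q((X⁻¹))`, realized as the field of formal Laurent
series in the variable `T = X⁻¹`. -/
abbrev F : Type := LaurentSeries Fq

/-- `q`, the cardinality of the coefficient field. -/
def qq : ℕ := Fintype.card Fq

variable {Fq}

/-- The absolute value `|a| = q ^ (deg a)`.  In the variable `T = X⁻¹`,
the degree of `a` (the largest power of `X` occurring) is `-(a.order)`. -/
def absv (a : F Fq) : ℝ :=
  if a = 0 then 0 else (qq Fq : ℝ) ^ (-(a.order))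

/-- The element `X` of `F` (the inverse of the Laurent-series variable `T`). -/
def Xvar : F Fq := HahnSeries.single (-1 : ℤ) 1

/-- The embedding of `Λ = 𝔽_q[X]` into `F`, sending `X` to `Xvar`. -/
def emb (p : Polynomial Fq) : F Fq := Polynomial.aeval (Xvar : F Fq) p

/-- The absolute value of a polynomial, viewed inside `F`. -/
def pabs (p : Polynomial Fq) : ℝ := absv (emb p)

/-- The supremum norm on `F^k`. -/
def snorm {k : ℕ} (x : Fin k → F Fq) : ℝ := ⨆ i, absv (x i)

/-- The supremum norm of a vector of polynomials. -/
def pnorm {k : ℕ} (a : Fin k → Polynomial Fq) : ℝ := ⨆ i, pabs (a i)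

/-- Open ball in `F^d` for the supremum norm. -/
def Ball {d : ℕ} (x₀ : Fin d → F Fq) (r : ℝ) : Set (Fin d → F Fq) :=
  {x | snorm (x - x₀) < r}

/-- Closed ball in `F^d` for the supremum norm. -/
def CBall {d : ℕ} (x₀ : Fin d → F Fq) (r : ℝ) : Set (Fin d → F Fq) :=
  {x | snorm (x - x₀) ≤ r}

/-- `F` carries the Borel σ-algebra of its valuation topology. -/
instance : MeasurableSpace (F Fq) := borel _

/-- A Haar measure on `F^d`: a translation invariant measure, normalized so that
the closed unit ball has measure `1`. -/
def IsHaar {d : ℕ} (μ : Measure (Fin d → F Fq)) : Prop :=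
  (∀ (v : Fin d → F Fq) (s : Set (Fin d → F Fq)), μ ((fun x => v + x) ⁻¹' s) = μ s) ∧
    μ {x : Fin d → F Fq | snorm x ≤ 1} = 1

/-- Partial derivative in the `j`-th coordinate, as a limit of difference quotients. -/
def pderiv {d : ℕ} (j : Fin d) (g : (Fin d → F Fq) → F Fq) (x : Fin d → F Fq) : F Fq :=
  limUnder (𝓝[≠] (0 : F Fq)) fun t => (g (Function.update x j (x j + t)) - g x) / t

/-- The supremum norm of the gradient. -/
def gradNorm {d : ℕ} (g : (Fin d → F Fq) → F Fq) (x : Fin d → F Fq) : ℝ :=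
  snorm fun j => pderiv j g x

/-- The supremum norm of the skew gradient `∇̃(g₁,g₂) = g₁∇g₂ - g₂∇g₁`. -/
def skewGradNorm {d : ℕ} (g₁ g₂ : (Fin d → F Fq) → F Fq) (x : Fin d → F Fq) : ℝ :=
  snorm fun j => g₁ x * pderiv j g₂ x - g₂ x * pderiv j g₁ x

/-- `g` is analytic on `S`: around every point of `S` it is the sum of a convergent
power series. -/
def IsAnalyticOn {d : ℕ} (S : Set (Fin d → F Fq)) (g : (Fin d → F Fq) → F Fq) : Prop :=
  ∀ x₀ ∈ S, ∃ r : ℝ, 0 < r ∧ ∃ c : (Fin d →₀ ℕ) → F Fq,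
    ∀ x : Fin d → F Fq, snorm (x - x₀) < r →
      HasSum (fun m : Fin d →₀ ℕ => c m * ∏ i : Fin d, (x i - x₀ i) ^ m i) (g x)

/-- `g` is analytic on `U` and extends analytically to the boundary of `U`. -/
def AnalyticWithBoundary {d : ℕ} (U : Set (Fin d → F Fq)) (g : (Fin d → F Fq) → F Fq) : Prop :=
  ∃ g' : (Fin d → F Fq) → F Fq, IsAnalyticOn (closure U) g' ∧ Set.EqOn g' g U

/-- All second-order difference quotients of `g` are bounded by `1` in absolute value
on `U` (condition (IV)/(VI) of Das–Ganguly). -/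
def SecondDiffQuotBound {d : ℕ} (U : Set (Fin d → F Fq)) (g : (Fin d → F Fq) → F Fq) : Prop :=
  (∀ i j : Fin d, i ≠ j → ∀ x : Fin d → F Fq, ∀ s₁ s₂ t₁ t₂ : F Fq,
      s₁ ≠ s₂ → t₁ ≠ t₂ →
      (∀ s ∈ ({s₁, s₂} : Set (F Fq)), ∀ t ∈ ({t₁, t₂} : Set (F Fq)),
        Function.update (Function.update x i s) j t ∈ U) →
      absv ((((g (Function.update (Function.update x i s₁) j t₁)
                - g (Function.update (Function.update x i s₂) j t₁))
              - (g (Function.update (Function.update x i s₁) j t₂)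
                - g (Function.update (Function.update x i s₂) j t₂)))
            / ((s₁ - s₂) * (t₁ - t₂)))) ≤ 1) ∧
  (∀ i : Fin d, ∀ x : Fin d → F Fq, ∀ s₁ s₂ s₃ : F Fq,
      s₁ ≠ s₂ → s₁ ≠ s₃ → s₂ ≠ s₃ →
      (∀ s ∈ ({s₁, s₂, s₃} : Set (F Fq)), Function.update x i s ∈ U) →
      absv (((g (Function.update x i s₁) - g (Function.update x i s₃)) / (s₁ - s₃)
            - (g (Function.update x i s₂) - g (Function.update x i s₃)) / (s₂ - s₃))
            / (s₁ - s₂)) ≤ 1)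

/-- The restrictions of `1, f 0, …, f (n-1)` to any open subset of `U` are linearly
independent over `F` (condition (III)). -/
def IndepOnOpens {d n : ℕ} (U : Set (Fin d → F Fq))
    (f : Fin n → (Fin d → F Fq) → F Fq) : Prop :=
  ∀ V : Set (Fin d → F Fq), IsOpen V → V.Nonempty → V ⊆ U →
    ∀ (c₀ : F Fq) (c : Fin n → F Fq),
      (∀ x ∈ V, c₀ + ∑ i, c i * f i x = 0) → c₀ = 0 ∧ ∀ i, c i = 0

/-- Conditions (II), (III) and (IV) of Das–Ganguly on the map `f : U → F^n`. -/
structure Nondeg {d n : ℕ} (U : Set (Fin d → F Fq))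
    (f : Fin n → (Fin d → F Fq) → F Fq) : Prop where
  analytic : ∀ i, AnalyticWithBoundary U (f i)
  first_coord : ∀ (hn : 0 < n) (hd : 0 < d), ∀ x ∈ U, f ⟨0, hn⟩ x = x ⟨0, hd⟩
  indep : IndepOnOpens U f
  bound : ∀ x ∈ U, ∀ i, absv (f i x) ≤ 1
  grad_bound : ∀ x ∈ U, ∀ i, gradNorm (f i) x ≤ 1
  second_bound : ∀ i, SecondDiffQuotBound U (f i)

/-- Condition (VI) of Das–Ganguly on the inhomogeneous part `θ : U → F`. -/
structure ThetaCond {d : ℕ} (U : Set (Fin d → F Fq))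
    (θ : (Fin d → F Fq) → F Fq) : Prop where
  analytic : AnalyticWithBoundary U θ
  bound : ∀ x ∈ U, absv (θ x) ≤ 1
  grad_bound : ∀ x ∈ U, gradNorm θ x ≤ 1
  second_bound : SecondDiffQuotBound U θ

/-- `U` is an open box in `F^d` with respect to the sup norm. -/
def IsOpenBox {d : ℕ} (U : Set (Fin d → F Fq)) : Prop :=
  ∃ (x₀ : Fin d → F Fq) (r : Fin d → ℝ), (∀ i, 0 < r i) ∧
    U = {x | ∀ i, absv (x i - x₀ i) < r i}

/-- A multivariable approximating function `Ψ : Λⁿ → ℝ₊`. -/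
def IsApproxFun {n : ℕ} (Ψ : (Fin n → Polynomial Fq) → ℝ) : Prop :=
  (∀ a, 0 < Ψ a) ∧
    ∀ a b : Fin n → Polynomial Fq, (∀ i, pabs (a i) ≤ pabs (b i)) → Ψ b ≤ Ψ a

/-- The set `W_f(Ψ,θ)` of points `x ∈ U` at which `f x` is `(Ψ,θ)`-approximable:
there are infinitely many `(a, a₀) ∈ (Λⁿ \ {0}) × Λ` with
`|f(x)·a + a₀ + θ(x)| < Ψ(a)`. -/
def Wset {d n : ℕ} (U : Set (Fin d → F Fq)) (f : Fin n → (Fin d → F Fq) → F Fq)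
    (Ψ : (Fin n → Polynomial Fq) → ℝ) (θ : (Fin d → F Fq) → F Fq) :
    Set (Fin d → F Fq) :=
  {x ∈ U | {p : (Fin n → Polynomial Fq) × Polynomial Fq |
      p.1 ≠ 0 ∧
        absv ((∑ i, emb (p.1 i) * f i x) + emb p.2 + θ x) < Ψ p.1}.Infinite}

/-- `g` is `(C,α)`-good on `V` with respect to the measure `μ`:
for every ball `B ⊆ V` and every `ε > 0`,
`μ {x ∈ B : g x < ε} ≤ C (ε / ‖g‖_B)^α μ B`. -/
def IsCAGoodOn {d : ℕ} (μ : Measure (Fin d → F Fq)) (C α : ℝ)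
    (V : Set (Fin d → F Fq)) (g : (Fin d → F Fq) → ℝ) : Prop :=
  ∀ (x₀ : Fin d → F Fq) (r : ℝ), 0 < r → Ball x₀ r ⊆ V →
    ∀ ε : ℝ, 0 < ε →
      μ {x ∈ Ball x₀ r | g x < ε} ≤
        ENNReal.ofReal C *
          (ENNReal.ofReal ε / ENNReal.ofReal (sSup (g '' Ball x₀ r))) ^ α *
          μ (Ball x₀ r)

/-- The sup norm of the wedge `a ∧ a'` of two vectors of `Fⁿ`. -/
def wedgeNorm {n : ℕ} (a a' : Fin n → F Fq) : ℝ :=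
  ⨆ p : Fin n × Fin n, absv (a p.1 * a' p.2 - a p.2 * a' p.1)

/-- `a, a'` are orthonormal: `‖a‖ = ‖a'‖ = ‖a ∧ a'‖ = 1`. -/
def Orthonormal2 {n : ℕ} (a a' : Fin n → F Fq) : Prop :=
  snorm a = 1 ∧ snorm a' = 1 ∧ wedgeNorm a a' = 1

/-- Diameter (in `ℝ≥0∞`) of a subset of `F^d` with respect to the sup norm. -/
def ediam {d : ℕ} (S : Set (Fin d → F Fq)) : ℝ≥0∞ :=
  ⨆ x ∈ S, ⨆ y ∈ S, ENNReal.ofReal (snorm (x - y))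

/-- The `s`-dimensional Hausdorff measure (as an outer measure) on `F^d` with respect
to the sup norm. -/
def hausdorffMeas {d : ℕ} (s : ℝ) (A : Set (Fin d → F Fq)) : ℝ≥0∞ :=
  ⨆ (δ : ℝ≥0∞) (_ : 0 < δ),
    ⨅ (t : ℕ → Set (Fin d → F Fq)) (_ : A ⊆ ⋃ k, t k) (_ : ∀ k, ediam (t k) ≤ δ),
      ∑' k, ⨆ (_ : (t k).Nonempty), ediam (t k) ^ s

/-- `max(0, t₁, …, tₙ)`; for integers `tᵢ ≥ 1` this is `maxᵢ tᵢ`. -/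
def zmax {n : ℕ} (tv : Fin n → ℤ) : ℤ := Finset.univ.fold max 0 tv

/-- The set `Φ^f(t,δ)` of `x ∈ U` for which there are `a ∈ Λⁿ \ {0}`, `a₀ ∈ Λ` with
`‖a‖ = q^t` and `|f(x)·a + a₀| < δ q^{-nt}`. -/
def PhiSet {d n : ℕ} (U : Set (Fin d → F Fq)) (f : Fin n → (Fin d → F Fq) → F Fq)
    (t : ℕ) (δ : ℝ) : Set (Fin d → F Fq) :=
  {x ∈ U | ∃ (a : Fin n → Polynomial Fq) (a₀ : Polynomial Fq), a ≠ 0 ∧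
      pnorm a = (qq Fq : ℝ) ^ t ∧
      absv ((∑ i, emb (a i) * f i x) + emb a₀) < δ * ((qq Fq : ℝ) ^ (n * t))⁻¹}

/-- `f` is nice at `x₀ ∈ U` (with respect to the Haar measure `μ`). -/
def NiceAt {d n : ℕ} (μ : Measure (Fin d → F Fq)) (U : Set (Fin d → F Fq))
    (f : Fin n → (Fin d → F Fq) → F Fq) (x₀ : Fin d → F Fq) : Prop :=
  ∃ U₀ : Set (Fin d → F Fq), IsOpen U₀ ∧ x₀ ∈ U₀ ∧ U₀ ⊆ U ∧
    ∃ δ w : ℝ, 0 < δ ∧ δ < 1 ∧ 0 < w ∧ w < 1 ∧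
      ∃ r₀ : ℝ, 0 < r₀ ∧ ∀ (y : Fin d → F Fq) (r : ℝ), 0 < r → r ≤ r₀ → Ball y r ⊆ U₀ →
        Filter.limsup (fun t : ℕ => μ (PhiSet U f t δ ∩ Ball y r)) Filter.atTop ≤
          ENNReal.ofReal w * μ (Ball y r)

/-- `f` is nice: it is nice at almost every point of `U`. -/
def Nice {d n : ℕ} (μ : Measure (Fin d → F Fq)) (U : Set (Fin d → F Fq))
    (f : Fin n → (Fin d → F Fq) → F Fq) : Prop :=
  μ {x ∈ U | ¬ NiceAt μ U f x} = 0


/-! ### Auxiliary lemmas for `coeff_sup_bound` -/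

section Aux

lemma one_lt_qqR : (1 : ℝ) < (qq Fq : ℝ) := by
  have : 1 < qq Fq := Fintype.one_lt_card
  exact_mod_cast this

lemma qqR_pos : (0 : ℝ) < (qq Fq : ℝ) := lt_trans one_pos one_lt_qqR

lemma absv_zero : absv (0 : F Fq) = 0 := if_pos rfl

lemma absv_of_ne {a : F Fq} (h : a ≠ 0) : absv a = (qq Fq : ℝ) ^ (-a.order) := if_neg h

lemma absv_nonneg (a : F Fq) : 0 ≤ absv a := by
  unfold absv
  split
  · exact le_refl 0
  · exact le_of_lt (zpow_pos qqR_pos _)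

lemma absv_pos {a : F Fq} (h : a ≠ 0) : 0 < absv a := by
  rw [absv_of_ne h]; exact zpow_pos qqR_pos _

lemma absv_mul (a b : F Fq) : absv (a * b) = absv a * absv b := by
  rcases eq_or_ne a 0 with rfl | ha
  · simp [absv_zero]
  rcases eq_or_ne b 0 with rfl | hb
  · simp [absv_zero]
  have hab : a * b ≠ 0 := mul_ne_zero ha hb
  rw [absv_of_ne hab, absv_of_ne ha, absv_of_ne hb,
    HahnSeries.order_mul ha hb, neg_add, zpow_add₀ (ne_of_gt (qqR_pos (Fq := Fq)))]

lemma absv_one : absv (1 : F Fq) = 1 := by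
  rw [absv_of_ne one_ne_zero, HahnSeries.order_one, neg_zero, zpow_zero]

lemma absv_neg (a : F Fq) : absv (-a) = absv a := by
  rcases eq_or_ne a 0 with rfl | ha
  · simp
  · rw [absv_of_ne (neg_ne_zero.mpr ha), absv_of_ne ha, HahnSeries.order_neg]

lemma absv_inv (a : F Fq) : absv a⁻¹ = (absv a)⁻¹ := by
  rcases eq_or_ne a 0 with rfl | ha
  · simp [absv_zero]
  have h := absv_mul a a⁻¹
  rw [mul_inv_cancel₀ ha, absv_one] at h
  exact (inv_eq_of_mul_eq_one_right h.symm).symm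

lemma absv_pow (a : F Fq) (n : ℕ) : absv (a ^ n) = (absv a) ^ n := by
  induction n with
  | zero => simp [absv_one]
  | succ n ih => rw [pow_succ, pow_succ, absv_mul, ih]

lemma absv_add_le (a b : F Fq) : absv (a + b) ≤ max (absv a) (absv b) := by
  rcases eq_or_ne a 0 with rfl | ha
  · simpa using le_max_right (absv (0 : F Fq)) (absv b)
  rcases eq_or_ne b 0 with rfl | hb
  · simpa using le_max_left (absv a) (absv (0 : F Fq))
  rcases eq_or_ne (a + b) 0 with hab | hab
  · rw [hab, absv_zero]
    exact le_trans (absv_nonneg a) (le_max_left _ _)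
  have hmin : min a.order b.order ≤ (a + b).order :=
    HahnSeries.min_order_le_order_add hab
  have h1 : (1 : ℝ) ≤ (qq Fq : ℝ) := le_of_lt one_lt_qqR
  rw [absv_of_ne hab, absv_of_ne ha, absv_of_ne hb]
  rcases le_total a.order b.order with h | h
  · have hle : -((a + b).order) ≤ -a.order := by
      rw [min_eq_left h] at hmin
      linarith
    exact le_trans (zpow_le_zpow_right₀ h1 hle) (le_max_left _ _)
  · have hle : -((a + b).order) ≤ -b.order := by
      rw [min_eq_right h] at hmin
      linarith
    exact le_trans (zpow_le_zpow_right₀ h1 hle) (le_max_right _ _)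

lemma absv_sub_le (a b : F Fq) : absv (a - b) ≤ max (absv a) (absv b) := by
  rw [sub_eq_add_neg]
  simpa [absv_neg] using absv_add_le a (-b)

lemma absv_sum_le {ι : Type*} (s : Finset ι) (f : ι → F Fq) {C : ℝ} (hC : 0 ≤ C)
    (h : ∀ i ∈ s, absv (f i) ≤ C) : absv (∑ i ∈ s, f i) ≤ C := by
  classical
  induction s using Finset.induction_on with
  | empty => simpa [absv_zero] using hC
  | insert _ _ hnot ih =>
    rename_i a s'
    rw [Finset.sum_insert hnot]
    refine le_trans (absv_add_le _ _) (max_le (h a (Finset.mem_insert_self _ _)) ?_)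
    exact ih fun i hi => h i (Finset.mem_insert_of_mem hi)

lemma absv_prod {ι : Type*} (s : Finset ι) (f : ι → F Fq) :
    absv (∏ i ∈ s, f i) = ∏ i ∈ s, absv (f i) := by
  classical
  induction s using Finset.induction_on with
  | empty => simp [absv_one]
  | insert _ _ hnot ih =>
    rename_i a s'
    rw [Finset.prod_insert hnot, Finset.prod_insert hnot, absv_mul, ih]

lemma nodal_coeff_bound {ι : Type*} [DecidableEq ι] (s : Finset ι) (v : ι → F Fq) {ρ : ℝ}
    (hρ : 0 < ρ) (hv : ∀ i ∈ s, absv (v i) ≤ ρ) (t : ℕ) :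
    absv ((Lagrange.nodal s v).coeff t) ≤ ρ ^ ((s.card : ℤ) - t) := by
  induction s using Finset.induction_on generalizing t with
  | empty =>
    rcases Nat.eq_zero_or_pos t with rfl | ht
    · simp [Lagrange.nodal, absv_one]
    · have : ((1 : Polynomial (F Fq))).coeff t = 0 := by
        rw [Polynomial.coeff_one]; simp [Nat.pos_iff_ne_zero.mp ht]
      rw [Lagrange.nodal_empty, this, absv_zero]
      positivity
  | insert _ _ hnot ih =>
    rename_i a s'
    have hva : absv (v a) ≤ ρ := hv a (Finset.mem_insert_self _ _)
    have hv' : ∀ i ∈ s', absv (v i) ≤ ρ := fun i hi => hv i (Finset.mem_insert_of_mem hi)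
    have hcard : ((insert a s').card : ℤ) = s'.card + 1 := by
      rw [Finset.card_insert_of_notMem hnot]; push_cast; ring
    rw [Lagrange.nodal_insert_eq_nodal hnot, sub_mul, Polynomial.coeff_sub,
      Polynomial.coeff_C_mul]
    rcases Nat.eq_zero_or_pos t with rfl | ht
    · have hX : ((Polynomial.X : Polynomial (F Fq)) * Lagrange.nodal s' v).coeff 0 = 0 := by
        rw [Polynomial.mul_coeff_zero, Polynomial.coeff_X_zero, zero_mul]
      rw [hX, zero_sub, absv_neg, absv_mul]
      calc absv (v a) * absv ((Lagrange.nodal s' v).coeff 0)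
          ≤ ρ * ρ ^ ((s'.card : ℤ) - 0) :=
            mul_le_mul hva (ih hv' 0) (absv_nonneg _) (le_of_lt hρ)
        _ = ρ ^ (((insert a s').card : ℤ) - 0) := by
            rw [hcard]
            rw [show (s'.card : ℤ) + 1 - 0 = 1 + ((s'.card : ℤ) - 0) by ring,
              zpow_add₀ hρ.ne', zpow_one]
    · obtain ⟨t', rfl⟩ : ∃ t', t = t' + 1 := ⟨t - 1, by omega⟩
      rw [Polynomial.coeff_X_mul]
      refine le_trans (absv_sub_le _ _) (max_le ?_ ?_)
      · calc absv ((Lagrange.nodal s' v).coeff t') ≤ ρ ^ ((s'.card : ℤ) - t') := ih hv' t'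
          _ = ρ ^ (((insert a s').card : ℤ) - (t' + 1)) := by rw [hcard]; ring_nf
      · rw [absv_mul]
        calc absv (v a) * absv ((Lagrange.nodal s' v).coeff (t' + 1))
            ≤ ρ * ρ ^ ((s'.card : ℤ) - (t' + 1)) :=
              mul_le_mul hva (ih hv' (t' + 1)) (absv_nonneg _) (le_of_lt hρ)
          _ = ρ ^ (((insert a s').card : ℤ) - (t' + 1)) := by
              rw [hcard, show (s'.card : ℤ) + 1 - ((t' : ℤ) + 1) = 1 + ((s'.card : ℤ) - (t' + 1)) by ring,
                zpow_add₀ hρ.ne', zpow_one]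

lemma divByMonic_coeff_bound (g : Polynomial (F Fq)) (k : ℕ) (v : Fin (k + 1) → F Fq)
    {ρ C : ℝ} (hρ0 : 0 < ρ) (hρ1 : ρ ≤ 1) (hv : ∀ a, absv (v a) ≤ ρ)
    (hC : ∀ i : ℕ, absv (g.coeff i) ≤ C) (j : ℕ) :
    absv ((g /ₘ (Lagrange.nodal Finset.univ v)).coeff j) ≤ C * ρ ^ (-(j : ℤ)) := by
  classical
  set W := Lagrange.nodal Finset.univ v with hWdef
  have hW : W.Monic := Lagrange.nodal_monic
  have hWdeg : W.natDegree = k + 1 := by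
    rw [hWdef, Lagrange.natDegree_nodal, Finset.card_univ, Fintype.card_fin]
  have hC0 : 0 ≤ C := le_trans (absv_nonneg _) (hC 0)
  have hWcb : ∀ t : ℕ, absv (W.coeff t) ≤ ρ ^ ((k : ℤ) + 1 - t) := by
    intro t
    have := nodal_coeff_bound Finset.univ v hρ0 (fun i _ => hv i) t
    rwa [Finset.card_univ, Fintype.card_fin, show ((k + 1 : ℕ) : ℤ) = (k : ℤ) + 1 by push_cast; ring]
      at this
  suffices H : ∀ n : ℕ, ∀ j : ℕ, g.natDegree < j + n →
      absv ((g /ₘ W).coeff j) ≤ C * ρ ^ (-(j : ℤ)) by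
    exact H (g.natDegree + 1) j (by omega)
  intro n
  induction n with
  | zero =>
    intro j hj
    have hdegQ : (g /ₘ W).degree < (j : WithBot ℕ) := by
      refine lt_of_le_of_lt (Polynomial.degree_divByMonic_le g W) ?_
      refine lt_of_le_of_lt (Polynomial.degree_le_natDegree) ?_
      exact_mod_cast (by omega : g.natDegree < j)
    rw [Polynomial.coeff_eq_zero_of_degree_lt hdegQ, absv_zero]
    positivity
  | succ n ih =>
    intro j hj
    have hPr0 : (g %ₘ W).coeff (j + (k + 1)) = 0 := by
      apply Polynomial.coeff_eq_zero_of_degree_lt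
      refine lt_of_lt_of_le (Polynomial.degree_modByMonic_lt g hW) ?_
      rw [Polynomial.degree_eq_natDegree hW.ne_zero, hWdeg]
      exact_mod_cast (by omega : k + 1 ≤ j + (k + 1))
    have h2 : g.coeff (j + (k + 1)) =
        ∑ p ∈ Finset.HasAntidiagonal.antidiagonal (j + (k + 1)), W.coeff p.1 * (g /ₘ W).coeff p.2 := by
      conv_lhs => rw [← Polynomial.modByMonic_add_div g W]
      rw [Polynomial.coeff_add, hPr0, zero_add, Polynomial.coeff_mul]
    have hmem : ((k + 1 : ℕ), j) ∈ Finset.HasAntidiagonal.antidiagonal (j + (k + 1)) := by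
      rw [Finset.HasAntidiagonal.mem_antidiagonal]; omega
    have hWtop : W.coeff (k + 1) = 1 := by
      rw [← hWdeg]; exact hW.coeff_natDegree
    have h3 : (g /ₘ W).coeff j = g.coeff (j + (k + 1)) -
        ∑ p ∈ (Finset.HasAntidiagonal.antidiagonal (j + (k + 1))).erase ((k + 1 : ℕ), j),
          W.coeff p.1 * (g /ₘ W).coeff p.2 := by
      rw [h2, ← Finset.add_sum_erase _ _ hmem, hWtop, one_mul]
      ring
    have hbound : (0 : ℝ) ≤ C * ρ ^ (-(j : ℤ)) := by positivity
    rw [h3]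
    refine le_trans (absv_sub_le _ _) (max_le ?_ ?_)
    · calc absv (g.coeff (j + (k + 1))) ≤ C := hC _
        _ ≤ C * ρ ^ (-(j : ℤ)) := by
            have h1 : ρ ^ (j : ℕ) ≤ 1 := pow_le_one₀ hρ0.le hρ1
            have h2 : (1 : ℝ) ≤ ρ ^ (-(j : ℤ)) := by
              rw [zpow_neg, zpow_natCast, one_le_inv_iff₀]
              exact ⟨pow_pos hρ0 j, h1⟩
            nlinarith
    · refine absv_sum_le _ _ hbound ?_
      rintro ⟨t, u⟩ hp
      obtain ⟨hp1, hp2⟩ := Finset.mem_erase.mp hp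
      have htu : t + u = j + (k + 1) := Finset.HasAntidiagonal.mem_antidiagonal.mp hp2
      by_cases ht : t ≤ k
      · have hu : j < u := by omega
        have hQ := ih u (by omega)
        have hWt := hWcb t
        rw [absv_mul]
        calc absv (W.coeff t) * absv ((g /ₘ W).coeff u)
            ≤ ρ ^ ((k : ℤ) + 1 - t) * (C * ρ ^ (-(u : ℤ))) :=
              mul_le_mul hWt hQ (absv_nonneg _) (by positivity)
          _ = C * (ρ ^ ((k : ℤ) + 1 - t) * ρ ^ (-(u : ℤ))) := by ring
          _ = C * ρ ^ (-(j : ℤ)) := by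
              have htu' : ((k : ℤ) + 1 - t) + -(u : ℤ) = -(j : ℤ) := by omega
              rw [← zpow_add₀ hρ0.ne', htu']
      · have htk : k + 1 < t := by
          rcases Nat.lt_or_ge (k + 1) t with h | h
          · exact h
          · exfalso
            have : t = k + 1 := by omega
            subst this
            exact hp1 (by simp; omega)
        have hWt0 : W.coeff t = 0 :=
          Polynomial.coeff_eq_zero_of_natDegree_lt (by omega)
        rw [hWt0, zero_mul, absv_zero]
        exact hbound

end Aux

/-- **Claim (one-variable coefficient bound).** If `g(x) = ∑_{i≤m} cᵢ xⁱ`,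
`0 < δ < 1`, `q^r < δ`, and `|c_k| ≥ δ maxᵢ |cᵢ|`, then
`sup_{x ∈ B(0,q^r)} |g(x)| ≥ |c_k| q^{rk} / k^k` (with `0^0 = 1`). -/
theorem coeff_sup_bound
    (Fq : Type) [Field Fq] [Fintype Fq]
    (m : ℕ) (g : Polynomial (F Fq)) (hdeg : g.natDegree ≤ m)
    (δ : ℝ) (hδ0 : 0 < δ) (hδ1 : δ < 1)
    (r : ℤ) (hr : (qq Fq : ℝ) ^ r < δ)
    (k : ℕ) (hk : k ≤ m)
    (hck : δ * (⨆ i : Fin (m + 1), absv (g.coeff i)) ≤ absv (g.coeff k)) :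
    absv (g.coeff k) * (qq Fq : ℝ) ^ (r * k) / (k : ℝ) ^ k ≤
      sSup ((fun x => absv (Polynomial.eval x g)) ''
        {x : F Fq | absv x ≤ (qq Fq : ℝ) ^ r}) := by
  classical
  set ρ : ℝ := (qq Fq : ℝ) ^ r with hρdef
  have hq1 : (1 : ℝ) < (qq Fq : ℝ) := one_lt_qqR
  have hρ0 : 0 < ρ := zpow_pos qqR_pos r
  have hρ1 : ρ ≤ 1 := le_of_lt (lt_trans hr hδ1)
  set Csup : ℝ := ⨆ i : Fin (m + 1), absv (g.coeff i) with hCdef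
  have hC0 : 0 ≤ Csup := by
    refine le_trans (absv_nonneg (g.coeff ((0 : Fin (m + 1)) : ℕ))) ?_
    exact le_ciSup (f := fun i : Fin (m + 1) => absv (g.coeff (i : ℕ)))
      (Set.Finite.bddAbove (Set.finite_range _)) (0 : Fin (m + 1))
  have hCi : ∀ i : ℕ, absv (g.coeff i) ≤ Csup := by
    intro i
    rcases le_or_gt i m with h | h
    · exact le_ciSup (f := fun i : Fin (m + 1) => absv (g.coeff i))
        (Set.Finite.bddAbove (Set.finite_range _)) ⟨i, by omega⟩
    · rw [Polynomial.coeff_eq_zero_of_natDegree_lt (by omega), absv_zero]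
      exact hC0
  -- the image set and its boundedness
  set Sset : Set ℝ :=
    ((fun x => absv (Polynomial.eval x g)) '' {x : F Fq | absv x ≤ ρ}) with hSdef
  have heval : ∀ x : F Fq, absv x ≤ ρ → absv (Polynomial.eval x g) ≤ Csup := by
    intro x hx
    rw [Polynomial.eval_eq_sum_range' (lt_of_le_of_lt hdeg (Nat.lt_succ_self m))]
    refine absv_sum_le _ _ hC0 ?_
    intro i _
    rw [absv_mul]
    have hxp : absv (x ^ i) ≤ 1 := by
      rw [absv_pow]
      exact pow_le_one₀ (absv_nonneg x) (le_trans hx hρ1)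
    calc absv (g.coeff i) * absv (x ^ i) ≤ Csup * 1 :=
          mul_le_mul (hCi i) hxp (absv_nonneg _) hC0
      _ = Csup := mul_one _
  have hbdd : BddAbove Sset := by
    refine ⟨Csup, ?_⟩
    rintro _ ⟨x, hx, rfl⟩
    exact heval x hx
  have hS0 : 0 ≤ sSup Sset := by
    refine le_trans (absv_nonneg (Polynomial.eval 0 g)) (le_csSup hbdd ⟨0, ?_, rfl⟩)
    simp only [Set.mem_setOf_eq, absv_zero]
    exact hρ0.le
  by_cases hck0 : g.coeff k = 0
  · rw [hck0, absv_zero, zero_mul, zero_div]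
    exact hS0
  -- main case
  have hCpos : 0 < Csup := lt_of_lt_of_le (absv_pos hck0) (hCi k)
  -- construction of the interpolation nodes
  set t : ℕ := Nat.log (qq Fq) (max k 1) with htdef
  have hq : 1 < qq Fq := Fintype.one_lt_card
  have hqt : (qq Fq) ^ t ≤ max k 1 := Nat.pow_log_le_self (qq Fq) (by omega)
  have hqt2 : max k 1 < (qq Fq) ^ (t + 1) := Nat.lt_pow_succ_log_self hq (max k 1)
  obtain ⟨ι⟩ : Nonempty (Fin (k + 1) ↪ (Fin (t + 1) → Fq)) := by
    apply Function.Embedding.nonempty_of_card_le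
    rw [Fintype.card_fun, Fintype.card_fin, Fintype.card_fin]
    show k + 1 ≤ qq Fq ^ (t + 1)
    omega
  set u : Fin (k + 1) → F Fq :=
    fun a => ∑ s : Fin (t + 1), HahnSeries.single ((s : ℕ) : ℤ) (ι a s) with hudef
  have hucoeff : ∀ a (z : ℤ),
      (u a).coeff z = ∑ s : Fin (t + 1), (HahnSeries.single ((s : ℕ) : ℤ) (ι a s)).coeff z := by
    intro a z
    exact map_sum (HahnSeries.coeff.addMonoidHom z) _ _
  have hcoeff_at : ∀ a (s : Fin (t + 1)), (u a).coeff ((s : ℕ) : ℤ) = ι a s := by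
    intro a s
    rw [hucoeff]
    rw [Finset.sum_eq_single s]
    · exact HahnSeries.coeff_single_same _ _
    · intro s' _ hs'
      refine HahnSeries.coeff_single_of_ne ?_
      have : (s' : ℕ) ≠ (s : ℕ) := fun h => hs' (Fin.ext h)
      exact_mod_cast fun h => this (by exact_mod_cast h.symm)
    · intro h
      exact absurd (Finset.mem_univ s) h
  have hcoeff_neg : ∀ a (z : ℤ), z < 0 → (u a).coeff z = 0 := by
    intro a z hz
    rw [hucoeff]
    refine Finset.sum_eq_zero fun s _ => HahnSeries.coeff_single_of_ne ?_
    intro h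
    omega
  have hsublem : ∀ a b, a ≠ b →
      u a - u b ≠ 0 ∧ 0 ≤ (u a - u b).order ∧ (u a - u b).order ≤ (t : ℤ) := by
    intro a b hab
    have hex : ∃ s : Fin (t + 1), ι a s ≠ ι b s := by
      by_contra h
      push_neg at h
      exact hab (ι.injective (funext h))
    obtain ⟨s, hs⟩ := hex
    have h1 : (u a - u b).coeff ((s : ℕ) : ℤ) ≠ 0 := by
      rw [HahnSeries.coeff_sub, hcoeff_at, hcoeff_at]
      exact sub_ne_zero.mpr hs
    have hne0 : u a - u b ≠ 0 := by
      intro h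
      rw [h] at h1
      exact h1 rfl
    refine ⟨hne0, ?_, ?_⟩
    · by_contra h
      push_neg at h
      apply mt HahnSeries.coeff_order_eq_zero.mp hne0
      rw [HahnSeries.coeff_sub, hcoeff_neg a _ h, hcoeff_neg b _ h, sub_zero]
    · refine le_trans (HahnSeries.order_le_of_coeff_ne_zero h1) ?_
      have : (s : ℕ) ≤ t := Fin.is_le s
      exact_mod_cast this
  have hu1 : ∀ a, absv (u a) ≤ 1 := by
    intro a
    rcases eq_or_ne (u a) 0 with h | h
    · rw [h, absv_zero]; norm_num
    · rw [absv_of_ne h]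
      have h0 : 0 ≤ (u a).order := by
        by_contra hlt
        push_neg at hlt
        exact mt HahnSeries.coeff_order_eq_zero.mp h (hcoeff_neg a _ hlt)
      calc (qq Fq : ℝ) ^ (-(u a).order) ≤ (qq Fq : ℝ) ^ (0 : ℤ) :=
            zpow_le_zpow_right₀ (le_of_lt hq1) (by omega)
        _ = 1 := zpow_zero _
  set sc : F Fq := HahnSeries.single (-r) (1 : Fq) with hscdef
  have hsc0 : sc ≠ 0 := HahnSeries.single_ne_zero one_ne_zero
  have hscabs : absv sc = ρ := by
    rw [absv_of_ne hsc0, HahnSeries.order_single one_ne_zero, neg_neg]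
  set v : Fin (k + 1) → F Fq := fun a => sc * u a with hvdef
  have hvρ : ∀ a, absv (v a) ≤ ρ := by
    intro a
    rw [hvdef]
    simp only []
    rw [absv_mul, hscabs]
    calc ρ * absv (u a) ≤ ρ * 1 := by
          exact mul_le_mul_of_nonneg_left (hu1 a) hρ0.le
      _ = ρ := mul_one _
  set T : ℝ := (qq Fq : ℝ) ^ (t : ℕ) with hTdef
  have hT1 : (1 : ℝ) ≤ T := one_le_pow₀ (le_of_lt hq1)
  have hT0 : (0 : ℝ) < T := lt_of_lt_of_le one_pos hT1
  set η : ℝ := ρ * T⁻¹ with hηdef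
  have hη : 0 < η := by positivity
  have hdist : ∀ a b, a ≠ b → η ≤ absv (v a - v b) := by
    intro a b hab
    obtain ⟨hne0, hord0, hordt⟩ := hsublem a b hab
    have : v a - v b = sc * (u a - u b) := by rw [hvdef]; simp only []; ring
    rw [this, absv_mul, hscabs, absv_of_ne hne0]
    refine mul_le_mul_of_nonneg_left ?_ hρ0.le
    have : (qq Fq : ℝ) ^ (-(t : ℤ)) ≤ (qq Fq : ℝ) ^ (-(u a - u b).order) :=
      zpow_le_zpow_right₀ (le_of_lt hq1) (by omega)
    refine le_trans ?_ this
    rw [hTdef, zpow_neg, zpow_natCast]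
  have hinj : Set.InjOn v ↑(Finset.univ : Finset (Fin (k + 1))) := by
    intro a _ b _ hvab
    by_contra hab
    obtain ⟨hne0, _, _⟩ := hsublem a b hab
    apply hne0
    have hz : sc * (u a - u b) = 0 := by
      rw [mul_sub]
      rw [hvdef] at hvab
      simp only [] at hvab
      rw [hvab, sub_self]
    rcases mul_eq_zero.mp hz with h | h
    · exact absurd h hsc0
    · exact h
  -- interpolation setup
  set W : Polynomial (F Fq) := Lagrange.nodal Finset.univ v with hWdef
  have hW : W.Monic := Lagrange.nodal_monic
  have hWdeg : W.natDegree = k + 1 := by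
    rw [hWdef, Lagrange.natDegree_nodal, Finset.card_univ, Fintype.card_fin]
  have hWcb : ∀ s : ℕ, absv (W.coeff s) ≤ ρ ^ ((k : ℤ) + 1 - s) := by
    intro s
    have := nodal_coeff_bound Finset.univ v hρ0 (fun i _ => hvρ i) s
    rwa [Finset.card_univ, Fintype.card_fin,
      show ((k + 1 : ℕ) : ℤ) = (k : ℤ) + 1 by push_cast; ring] at this
  have hQb := divByMonic_coeff_bound g k v hρ0 hρ1 hvρ hCi
  set D : F Fq := (g %ₘ W).coeff k with hDdef
  -- |c_k - D| ≤ Csup * ρ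
  have hsub : absv (g.coeff k - D) ≤ Csup * ρ := by
    have hWQk : g.coeff k - D = ∑ p ∈ Finset.HasAntidiagonal.antidiagonal k,
        W.coeff p.1 * (g /ₘ W).coeff p.2 := by
      conv_lhs => rw [← Polynomial.modByMonic_add_div g W]
      rw [Polynomial.coeff_add, Polynomial.coeff_mul, hDdef]
      ring
    rw [hWQk]
    refine absv_sum_le _ _ (by positivity) ?_
    rintro ⟨s, w⟩ hp
    have hsw : s + w = k := Finset.HasAntidiagonal.mem_antidiagonal.mp hp
    rw [absv_mul]
    calc absv (W.coeff s) * absv ((g /ₘ W).coeff w)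
        ≤ ρ ^ ((k : ℤ) + 1 - s) * (Csup * ρ ^ (-(w : ℤ))) :=
          mul_le_mul (hWcb s) (hQb w) (absv_nonneg _) (by positivity)
      _ = Csup * (ρ ^ ((k : ℤ) + 1 - s) * ρ ^ (-(w : ℤ))) := by ring
      _ = Csup * ρ := by
          have : ((k : ℤ) + 1 - s) + -(w : ℤ) = 1 := by omega
          rw [← zpow_add₀ hρ0.ne', this, zpow_one]
  have hlt : Csup * ρ < absv (g.coeff k) := by
    calc Csup * ρ < Csup * δ := by
          exact mul_lt_mul_of_pos_left hr hCpos
      _ = δ * Csup := mul_comm _ _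
      _ ≤ absv (g.coeff k) := hck
  have hckD : absv (g.coeff k) ≤ absv D := by
    have h1 : absv (g.coeff k) ≤ max (absv (g.coeff k - D)) (absv D) := by
      have := absv_add_le (g.coeff k - D) D
      rwa [sub_add_cancel] at this
    rcases le_max_iff.mp h1 with h | h
    · exact absurd (lt_of_le_of_lt h (lt_of_le_of_lt hsub hlt)) (lt_irrefl _)
    · exact h
  -- D as a sum of node values
  have hdeglt : (g %ₘ W).degree < ((Finset.univ : Finset (Fin (k + 1))).card : ℕ) := by
    refine lt_of_lt_of_le (Polynomial.degree_modByMonic_lt g hW) ?_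
    rw [Polynomial.degree_eq_natDegree hW.ne_zero, hWdeg, Finset.card_univ, Fintype.card_fin]
  have hPr : g %ₘ W = Lagrange.interpolate Finset.univ v (fun a => Polynomial.eval (v a) g) := by
    refine Lagrange.eq_interpolate_of_eval_eq _ hinj hdeglt ?_
    intro a _
    conv_rhs => rw [← Polynomial.modByMonic_add_div g W]
    rw [Polynomial.eval_add, Polynomial.eval_mul, hWdef, Lagrange.eval_nodal_at_node
      (Finset.mem_univ a), zero_mul, add_zero]
  have hDsum : D = ∑ a : Fin (k + 1),
      Polynomial.eval (v a) g * ((Lagrange.basis Finset.univ v a).coeff k) := by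
    rw [hDdef, hPr, Lagrange.interpolate_apply, Polynomial.finset_sum_coeff]
    exact Finset.sum_congr rfl fun a _ => Polynomial.coeff_C_mul _
  -- basis coefficient
  have hcarde : ∀ a : Fin (k + 1), (Finset.univ.erase a).card = k := by
    intro a
    rw [Finset.card_erase_of_mem (Finset.mem_univ a), Finset.card_univ, Fintype.card_fin]
    rfl
  have hbc : ∀ a, (Lagrange.basis Finset.univ v a).coeff k =
      ∏ b ∈ Finset.univ.erase a, (v a - v b)⁻¹ := by
    intro a
    have hsplit : Lagrange.basis Finset.univ v a =
        Polynomial.C (∏ b ∈ Finset.univ.erase a, (v a - v b)⁻¹) *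
          Lagrange.nodal (Finset.univ.erase a) v := by
      unfold Lagrange.basis Lagrange.basisDivisor
      rw [Lagrange.nodal_eq, map_prod, ← Finset.prod_mul_distrib]
    rw [hsplit, Polynomial.coeff_C_mul]
    have hmon : (Lagrange.nodal (Finset.univ.erase a) v).Monic := Lagrange.nodal_monic
    have hnd : (Lagrange.nodal (Finset.univ.erase a) v).natDegree = k := by
      rw [Lagrange.natDegree_nodal, hcarde a]
    have : (Lagrange.nodal (Finset.univ.erase a) v).coeff k = 1 := by
      have h := hmon.coeff_natDegree
      rwa [hnd] at h
    rw [this, mul_one]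
  have hbabs : ∀ a, absv ((Lagrange.basis Finset.univ v a).coeff k) ≤ η⁻¹ ^ k := by
    intro a
    rw [hbc a, absv_prod]
    calc ∏ b ∈ Finset.univ.erase a, absv ((v a - v b)⁻¹)
        ≤ ∏ _b ∈ Finset.univ.erase a, η⁻¹ := by
          refine Finset.prod_le_prod (fun b _ => absv_nonneg _) ?_
          intro b hb
          have hbne : a ≠ b := fun h => (Finset.mem_erase.mp hb).1 h.symm
          rw [absv_inv]
          exact inv_anti₀ hη (hdist a b hbne)
      _ = η⁻¹ ^ k := by rw [Finset.prod_const, hcarde a]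
  -- putting it together
  have hSa : ∀ a, absv (Polynomial.eval (v a) g) ≤ sSup Sset := by
    intro a
    exact le_csSup hbdd ⟨v a, hvρ a, rfl⟩
  have hDb : absv D ≤ sSup Sset * η⁻¹ ^ k := by
    rw [hDsum]
    refine absv_sum_le _ _ (by positivity) ?_
    intro a _
    rw [absv_mul]
    exact mul_le_mul (hSa a) (hbabs a) (absv_nonneg _) hS0
  have hchain : absv (g.coeff k) ≤ sSup Sset * η⁻¹ ^ k := le_trans hckD hDb
  have hfin : absv (g.coeff k) * η ^ k ≤ sSup Sset := by
    have := mul_le_mul_of_nonneg_right hchain (pow_nonneg hη.le k)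
    calc absv (g.coeff k) * η ^ k ≤ sSup Sset * η⁻¹ ^ k * η ^ k := this
      _ = sSup Sset := by
          rw [inv_pow, mul_assoc, inv_mul_cancel₀ (pow_ne_zero _ hη.ne'), mul_one]
  have hηk : η ^ k = (qq Fq : ℝ) ^ (r * (k : ℤ)) * (T ^ k)⁻¹ := by
    rw [hηdef, mul_pow, inv_pow, hρdef, zpow_mul, zpow_natCast]
  have hTk : T ^ k ≤ (k : ℝ) ^ k ∧ (0 : ℝ) < (k : ℝ) ^ k := by
    rcases Nat.eq_zero_or_pos k with rfl | hkpos
    · simp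
    · have hmax : max k 1 = k := Nat.max_eq_left (by omega)
      have hTle : T ≤ (k : ℝ) := by
        rw [hTdef]
        have : ((qq Fq) ^ t : ℕ) ≤ k := by omega
        exact_mod_cast this
      constructor
      · exact pow_le_pow_left₀ hT0.le hTle k
      · have : (0 : ℝ) < (k : ℝ) := by exact_mod_cast hkpos
        positivity
  rw [div_le_iff₀ hTk.2]
  have h1 : absv (g.coeff k) * (qq Fq : ℝ) ^ (r * (k : ℤ)) ≤ sSup Sset * T ^ k := by
    have := mul_le_mul_of_nonneg_right hfin (le_of_lt (pow_pos hT0 k))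
    calc absv (g.coeff k) * (qq Fq : ℝ) ^ (r * (k : ℤ))
        = absv (g.coeff k) * η ^ k * T ^ k := by
          rw [hηk]
          field_simp
      _ ≤ sSup Sset * T ^ k := this
  calc absv (g.coeff k) * (qq Fq : ℝ) ^ (r * (k : ℤ))
      ≤ sSup Sset * T ^ k := h1
    _ ≤ sSup Sset * (k : ℝ) ^ k := mul_le_mul_of_nonneg_left hTk.1 hS0

end KGFF
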